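/- The region Ω = S² \ (Γ¹ ∪ Γ² ∪ Γ³), where Γ¹, Γ², Γ³ are three alternate closed arcs of length π/3 of the equator, contains no closed geodesic of S². -/

import Mathlib

open Real

/-- The set of angles belonging to the three removed ("alternate") closed arcs of
length `π/3`: the equator is divided into six arcs `[mπ/3, (m+1)π/3]` and the arcs
with `m` even are removed. -/
def removedAngles : Set ℝ :=
  {θ | ∃ m : ℤ, Even m ∧ (m : ℝ) * (π / 3) ≤ θ ∧ θ ≤ ((m : ℝ) + 1) * (π / 3)}

/-- The point of the equator of `S²` with angle `θ`. -/
noncomputable def equatorPoint (θ : ℝ) : EuclideanSpace ℝ (Fin 3) :=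
  (WithLp.equiv 2 (Fin 3 → ℝ)).symm ![Real.cos θ, Real.sin θ, 0]

/-- The union `Γ¹ ∪ Γ² ∪ Γ³` of the three removed closed equatorial arcs. -/
def removedArcs : Set (EuclideanSpace ℝ (Fin 3)) :=
  {p | ∃ θ ∈ removedAngles, p = equatorPoint θ}

/-- Kendall's region `Ω = S² \ (Γ¹ ∪ Γ² ∪ Γ³)`. -/
def Omega : Set (EuclideanSpace ℝ (Fin 3)) :=
  Metric.sphere (0 : EuclideanSpace ℝ (Fin 3)) 1 \ removedArcs

lemma angle_or (θ : ℝ) : θ ∈ removedAngles ∨ θ + π ∈ removedAngles := by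
  have hπ : (0:ℝ) < π / 3 := by positivity
  set m : ℤ := ⌊θ / (π / 3)⌋ with hm
  have h1 : (m : ℝ) * (π / 3) ≤ θ := by
    have := Int.floor_le (θ / (π / 3))
    rwa [le_div_iff₀ hπ] at this
  have h2 : θ ≤ ((m : ℝ) + 1) * (π / 3) := by
    have := Int.lt_floor_add_one (θ / (π / 3))
    rw [div_lt_iff₀ hπ, ← hm] at this
    linarith
  rcases Int.even_or_odd m with he | ho
  · exact Or.inl ⟨m, he, h1, h2⟩
  · right
    refine ⟨m + 3, by rcases ho with ⟨k, hk⟩; exact ⟨k + 2, by omega⟩, ?_, ?_⟩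
    · push_cast; nlinarith
    · push_cast; nlinarith

lemma equatorPoint_apply (θ : ℝ) :
    equatorPoint θ 0 = Real.cos θ ∧ equatorPoint θ 1 = Real.sin θ ∧ equatorPoint θ 2 = 0 := by
  refine ⟨?_, ?_, ?_⟩ <;> simp [equatorPoint, WithLp.equiv_symm_apply]

/-- The region `Ω` contains no closed geodesic of `S²`: no great circle (the
intersection of `S²` with a 2-dimensional linear subspace of `ℝ³`) is contained
in `Ω`. -/
theorem kendall_region_contains_no_closed_geodesic :
    ∀ W : Submodule ℝ (EuclideanSpace ℝ (Fin 3)), Module.finrank ℝ W = 2 →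
      ¬ ((Metric.sphere (0 : EuclideanSpace ℝ (Fin 3)) 1 ∩ (W : Set (EuclideanSpace ℝ (Fin 3)))) ⊆ Omega) := by
  intro W hW hsub
  -- the plane z = 0
  set f : EuclideanSpace ℝ (Fin 3) →ₗ[ℝ] ℝ :=
    ((EuclideanSpace.proj (2 : Fin 3) : EuclideanSpace ℝ (Fin 3) →L[ℝ] ℝ) : EuclideanSpace ℝ (Fin 3) →ₗ[ℝ] ℝ) with hf
  set P : Submodule ℝ (EuclideanSpace ℝ (Fin 3)) := LinearMap.ker f with hP
  have hrange : LinearMap.range f = ⊤ := by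
    rw [LinearMap.range_eq_top]
    intro c
    exact ⟨EuclideanSpace.single 2 c, by simp [hf]⟩
  have hfin : Module.finrank ℝ (EuclideanSpace ℝ (Fin 3)) = 3 := finrank_euclideanSpace_fin
  have hPrank : Module.finrank ℝ P = 2 := by
    have h := LinearMap.finrank_range_add_finrank_ker f
    rw [hrange, finrank_top, Module.finrank_self, hfin] at h
    rw [hP]
    omega
  have hsum := Submodule.finrank_sup_add_finrank_inf_eq W P
  have hle : Module.finrank ℝ ↥(W ⊔ P) ≤ 3 := by
    have := Submodule.finrank_le (W ⊔ P)
    rwa [hfin] at this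
  have hne : W ⊓ P ≠ ⊥ := by
    intro h
    rw [h, finrank_bot, hW, hPrank] at hsum
    omega
  obtain ⟨v, hv, hv0⟩ := Submodule.exists_mem_ne_zero_of_ne_bot hne
  have hvW : v ∈ W := hv.1
  have hvz : v 2 = 0 := hv.2
  have hnv : (0:ℝ) < ‖v‖ := norm_pos_iff.mpr hv0
  set u : EuclideanSpace ℝ (Fin 3) := ‖v‖⁻¹ • v with hu
  have huW : u ∈ W := W.smul_mem _ hvW
  have hunorm : ‖u‖ = 1 := by
    rw [hu, norm_smul, norm_inv, norm_norm, inv_mul_cancel₀ (ne_of_gt hnv)]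
  have huz : u 2 = 0 := by
    rw [hu]; simp [hvz]
  have hsq : (u 0) ^ 2 + (u 1) ^ 2 = 1 := by
    have := EuclideanSpace.norm_eq u
    rw [hunorm] at this
    have h3 : ∑ i : Fin 3, ‖u i‖ ^ 2 = ‖u 0‖^2 + ‖u 1‖^2 + ‖u 2‖^2 := by
      simp [Fin.sum_univ_three]
    rw [h3, huz] at this
    have := Real.sqrt_eq_one.mp this.symm
    simpa [Real.norm_eq_abs, sq_abs] using this
  -- find the angle
  set z : ℂ := ⟨u 0, u 1⟩ with hz
  have hzabs : ‖z‖ = 1 := by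
    rw [Complex.norm_def, Complex.normSq_mk]
    rw [show u 0 * u 0 + u 1 * u 1 = (u 0)^2 + (u 1)^2 by ring, hsq, Real.sqrt_one]
  have hz0 : z ≠ 0 := by
    intro h; rw [h] at hzabs; simp at hzabs
  have hcos : Real.cos z.arg = u 0 := by
    rw [Complex.cos_arg hz0, hzabs]; simp [hz]
  have hsin : Real.sin z.arg = u 1 := by
    rw [Complex.sin_arg, hzabs]; simp [hz]
  set θ := z.arg with hθ
  have hue : equatorPoint θ = u := by
    ext i
    fin_cases i <;>
      simp [equatorPoint, WithLp.equiv_symm_apply, hcos, hsin, huz]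
  have hneg : equatorPoint (θ + π) = -u := by
    ext i
    fin_cases i <;>
      simp [equatorPoint, WithLp.equiv_symm_apply, Real.cos_add_pi, Real.sin_add_pi,
        ← hcos, ← hsin, huz]
  rcases angle_or θ with h | h
  · have : u ∈ Omega := hsub ⟨mem_sphere_zero_iff_norm.mpr hunorm, huW⟩
    exact this.2 ⟨θ, h, hue.symm⟩
  · have hmem : -u ∈ Metric.sphere (0 : EuclideanSpace ℝ (Fin 3)) 1 ∩ (W : Set _) :=
      ⟨mem_sphere_zero_iff_norm.mpr (by rw [norm_neg, hunorm]), W.neg_mem huW⟩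
    exact (hsub hmem).2 ⟨θ + π, h, hneg.symm⟩
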